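/- arXiv:1711.02610 — 2 statements merged into one kernel-verified Lean document; each statement's English description precedes it below -/
import Mathlib

section
/- Let g : R^n → C^(n) be measurable with χ₊(ξ)g(ξ) measurable, and suppose for 1 < p ≤ 2 and q = p/(p-1) that for every x₀ > 0 one has the slice bound (∫_{R^n} |χ₊(ξ)g(ξ)|^q e^{-2πx₀ q|ξ|} dξ)^{1/q} ≤ (∫_{R^n} |F(x₀+x̲)|^p dx̲)^{1/p}. Then (∫_{R^n} |χ₊(ξ)g(ξ)|^q (2πp|ξ|)^{-q/p} dξ)^{1/q} ≤ (∫₀^∞ ∫_{R^n} |F(x₀+x̲)|^p dx̲ dx₀)^{1/p}. -/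
open MeasureTheory Real
open scoped ENNReal

/-- Euclidean norm |ξ| on ℝⁿ. -/
noncomputable def nrm {n : ℕ} (ξ : Fin n → ℝ) : ℝ := Real.sqrt (∑ i, ξ i ^ 2)

lemma nrm_nonneg {n : ℕ} (ξ : Fin n → ℝ) : 0 ≤ nrm ξ := Real.sqrt_nonneg _

lemma measurable_nrm {n : ℕ} : Measurable (fun ξ : Fin n → ℝ => nrm ξ) := by
  apply Continuous.measurable
  exact Real.continuous_sqrt.comp (continuous_finset_sum _ fun i _ => (continuous_apply i).pow 2)

lemma lintegral_exp_neg_mul_Ioi {b : ℝ} (hb : 0 < b) :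
    ∫⁻ x in Set.Ioi (0:ℝ), ENNReal.ofReal (Real.exp (-(b * x))) = ENNReal.ofReal (1 / b) := by
  rw [← MeasureTheory.ofReal_integral_eq_lintegral_ofReal]
  · congr 1
    have h := integral_comp_mul_left_Ioi (fun y => Real.exp (-y)) 0 hb
    simp only [mul_zero] at h
    rw [h, integral_exp_neg_Ioi, neg_zero, Real.exp_zero, smul_eq_mul, mul_one, one_div]
  · have := exp_neg_integrableOn_Ioi 0 hb
    simpa [neg_mul] using this.integrable
  · exact Filter.Eventually.of_forall fun x => (Real.exp_pos _).le

/-- Minkowski's integral inequality for `ℝ≥0∞`-valued functions. -/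
lemma lintegral_lintegral_rpow_le {α β : Type*} [MeasurableSpace α] [MeasurableSpace β]
    (μ : Measure α) (ν : Measure β) [SigmaFinite μ] [SigmaFinite ν]
    (f : α → β → ℝ≥0∞) (hf : Measurable (Function.uncurry f)) {r : ℝ} (hr : 1 ≤ r) :
    (∫⁻ b, (∫⁻ a, f a b ∂μ) ^ r ∂ν) ^ (1/r) ≤ ∫⁻ a, (∫⁻ b, (f a b) ^ r ∂ν) ^ (1/r) ∂μ := by
  obtain rfl | hr1 := hr.eq_or_lt
  · simp only [ENNReal.rpow_one, one_div_one]
    exact (lintegral_lintegral_swap hf.aemeasurable).ge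
  have hr0 : (0:ℝ) < r := lt_trans one_pos hr1
  have hrne : r ≠ 0 := ne_of_gt hr0
  set r' : ℝ := r / (r - 1) with hr'def
  have hconj : r'.HolderConjugate r := (Real.HolderConjugate.conjExponent hr1).symm
  have hr'0 : (0:ℝ) < r' := hconj.pos
  set F : β → ℝ≥0∞ := fun b => ∫⁻ a, f a b ∂μ with hFdef
  have hFm : Measurable F := hf.lintegral_prod_left
  set M : ℝ≥0∞ := ∫⁻ a, (∫⁻ b, f a b ^ r ∂ν) ^ (1/r) ∂μ with hMdef
  suffices h : ∫⁻ b, F b ^ r ∂ν ≤ M ^ r by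
    calc (∫⁻ b, F b ^ r ∂ν) ^ (1/r) ≤ (M ^ r) ^ (1/r) :=
          ENNReal.rpow_le_rpow h (by positivity)
    _ = M := by rw [← ENNReal.rpow_mul, mul_one_div, div_self hrne, ENNReal.rpow_one]
  -- truncation
  set g : ℕ → β → ℝ≥0∞ := fun k b =>
    (spanningSets ν k).indicator (fun b => min (F b ^ r) (k : ℝ≥0∞)) b with hgdef
  have hFr : Measurable fun b => F b ^ r := hFm.pow_const r
  have hgm : ∀ k, Measurable (g k) :=
    fun k => (hFr.min measurable_const).indicator (measurableSet_spanningSets ν k)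
  have hgmono : Monotone g := by
    intro i j hij b
    by_cases hb : b ∈ spanningSets ν i
    · have hbj : b ∈ spanningSets ν j := monotone_spanningSets ν hij hb
      simp only [hgdef, Set.indicator_of_mem hb, Set.indicator_of_mem hbj]
      exact min_le_min le_rfl (by exact_mod_cast Nat.cast_le.2 hij)
    · simp [hgdef, Set.indicator_of_notMem hb]
  have hpt : ∀ b, F b ^ r ≤ ⨆ k, g k b := by
    intro b
    obtain ⟨k₀, hk₀⟩ : ∃ k, b ∈ spanningSets ν k := by
      have : b ∈ ⋃ k, spanningSets ν k := by rw [iUnion_spanningSets]; trivial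
      exact Set.mem_iUnion.mp this
    by_cases hfin : F b ^ r = ∞
    · rw [hfin]
      have hle : ∀ m : ℕ, (m : ℝ≥0∞) ≤ ⨆ k, g k b := by
        intro m
        refine le_iSup_of_le (max k₀ m) ?_
        have hb : b ∈ spanningSets ν (max k₀ m) :=
          monotone_spanningSets ν (le_max_left _ _) hk₀
        rw [hgdef]
        simp only [Set.indicator_of_mem hb, hfin, min_eq_right (le_top : ((max k₀ m : ℕ) : ℝ≥0∞) ≤ ⊤)]
        exact_mod_cast Nat.cast_le.2 (le_max_right k₀ m)
      have : (⊤ : ℝ≥0∞) = ⨆ m : ℕ, (m : ℝ≥0∞) := by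
        refine le_antisymm ?_ le_top
        exact le_of_eq (ENNReal.iSup_natCast).symm
      rw [this]
      exact iSup_le hle
    · obtain ⟨m, hm⟩ := ENNReal.exists_nat_gt hfin
      refine le_iSup_of_le (max k₀ m) ?_
      have hb : b ∈ spanningSets ν (max k₀ m) :=
        monotone_spanningSets ν (le_max_left _ _) hk₀
      rw [hgdef]
      simp only [Set.indicator_of_mem hb]
      rw [min_eq_left]
      exact le_trans hm.le (by exact_mod_cast Nat.cast_le.2 (le_max_right k₀ m))
  -- main estimate for each truncation
  have hXk : ∀ k : ℕ, ∫⁻ b, g k b ∂ν ≤ M ^ r := by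
    intro k
    set s : Set β := spanningSets ν k with hsdef
    have hs : MeasurableSet s := measurableSet_spanningSets ν k
    have hXeq : ∫⁻ b, g k b ∂ν = ∫⁻ b in s, min (F b ^ r) (k : ℝ≥0∞) ∂ν := by
      rw [hgdef]
      exact lintegral_indicator hs _
    set X : ℝ≥0∞ := ∫⁻ b in s, min (F b ^ r) (k : ℝ≥0∞) ∂ν with hXdef
    rw [hXeq]
    have hXfin : X ≠ ∞ := by
      have : X ≤ (k : ℝ≥0∞) * ν s := by
        rw [hXdef, ← setLIntegral_const s (k : ℝ≥0∞)]
        exact lintegral_mono fun b => min_le_right _ _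
      exact ne_top_of_le_ne_top
        (ENNReal.mul_ne_top (ENNReal.natCast_ne_top k) (measure_spanningSets_lt_top ν k).ne) this
    set T : β → ℝ≥0∞ := fun b => (min (F b ^ r) (k : ℝ≥0∞)) ^ (1/r) with hTdef
    have hTm : Measurable T := (hFr.min measurable_const).pow_const _
    have hTr : ∀ b, T b ^ r = min (F b ^ r) (k : ℝ≥0∞) := by
      intro b
      rw [hTdef, ← ENNReal.rpow_mul, one_div, inv_mul_cancel₀ hrne, ENNReal.rpow_one]
    have hTle : ∀ b, T b ≤ F b := by
      intro b
      calc T b ≤ (F b ^ r) ^ (1/r) := ENNReal.rpow_le_rpow (min_le_left _ _) (by positivity)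
      _ = F b := by rw [← ENNReal.rpow_mul, mul_one_div, div_self hrne, ENNReal.rpow_one]
    have hmain : X ≤ X ^ (1/r') * M := by
      have hexp : (r - 1) * r' = r := by
        rw [hr'def, mul_comm]; exact div_mul_cancel₀ r (by linarith)
      calc X = ∫⁻ b in s, T b ^ (r - 1) * T b ∂ν := by
            refine lintegral_congr fun b => ?_
            rw [← hTr b]
            have : T b ^ (r - 1) * T b = T b ^ ((r - 1) + 1) := by
              rw [ENNReal.rpow_add_of_nonneg _ _ (by linarith) zero_le_one, ENNReal.rpow_one]
            rw [this, sub_add_cancel]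
      _ ≤ ∫⁻ b in s, T b ^ (r - 1) * F b ∂ν :=
            lintegral_mono fun b => mul_le_mul_right (hTle b) _
      _ = ∫⁻ b in s, ∫⁻ a, T b ^ (r - 1) * f a b ∂μ ∂ν := by
            refine lintegral_congr fun b => ?_
            rw [hFdef]
            exact (lintegral_const_mul _ (hf.comp (measurable_id.prodMk measurable_const))).symm
      _ = ∫⁻ a, ∫⁻ b in s, T b ^ (r - 1) * f a b ∂ν ∂μ := by
            apply lintegral_lintegral_swap
            apply Measurable.aemeasurable
            exact ((hTm.comp measurable_fst).pow_const _).mul (hf.comp measurable_swap)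
      _ ≤ ∫⁻ a, (∫⁻ b in s, (T b ^ (r - 1)) ^ r' ∂ν) ^ (1/r') *
            (∫⁻ b in s, f a b ^ r ∂ν) ^ (1/r) ∂μ := by
            refine lintegral_mono fun a => ?_
            exact ENNReal.lintegral_mul_le_Lp_mul_Lq _ hconj
              ((hTm.pow_const _).aemeasurable)
              ((hf.comp (measurable_const.prodMk measurable_id)).aemeasurable)
      _ ≤ ∫⁻ a, X ^ (1/r') * (∫⁻ b, f a b ^ r ∂ν) ^ (1/r) ∂μ := by
            refine lintegral_mono fun a => ?_
            have h1 : (∫⁻ b in s, (T b ^ (r - 1)) ^ r' ∂ν) ^ (1/r') = X ^ (1/r') := by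
              congr 1
              refine lintegral_congr fun b => ?_
              rw [← ENNReal.rpow_mul, hexp, hTr]
            rw [h1]
            refine mul_le_mul_right (ENNReal.rpow_le_rpow ?_ (by positivity)) _
            exact lintegral_mono' Measure.restrict_le_self le_rfl
      _ = X ^ (1/r') * M := by
            rw [hMdef]
            exact lintegral_const_mul' _ _ (ENNReal.rpow_ne_top_of_nonneg (by positivity) hXfin)
    by_cases hX0 : X = 0
    · rw [hX0]; exact zero_le
    have h1r : X ^ (1/r) ≤ M := by
      have hsum : 1/r + 1/r' = 1 := by
        have := (by simpa using hconj.inv_add_inv_eq_inv : r'⁻¹ + r⁻¹ = 1)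
        rw [one_div, one_div]; linarith [this]
      have hexp2 : (1:ℝ)/r = 1 + -(1/r') := by linarith
      calc X ^ (1/r) = X * X ^ (-(1/r')) := by
            rw [hexp2, ENNReal.rpow_add _ _ hX0 hXfin, ENNReal.rpow_one]
      _ ≤ (X ^ (1/r') * M) * X ^ (-(1/r')) := mul_le_mul_left hmain _
      _ = M * (X ^ (1/r') * X ^ (-(1/r'))) := by ring
      _ = M := by
            rw [← ENNReal.rpow_add _ _ hX0 hXfin, add_neg_cancel, ENNReal.rpow_zero, mul_one]
    calc X = (X ^ (1/r)) ^ r := by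
          rw [← ENNReal.rpow_mul, one_div, inv_mul_cancel₀ hrne, ENNReal.rpow_one]
    _ ≤ M ^ r := ENNReal.rpow_le_rpow h1r hr0.le
  calc ∫⁻ b, F b ^ r ∂ν ≤ ∫⁻ b, ⨆ k, g k b ∂ν := lintegral_mono hpt
  _ = ⨆ k, ∫⁻ b, g k b ∂ν := lintegral_iSup hgm hgmono
  _ ≤ M ^ r := iSup_le hXk

/-- let G(ξ) = |χ₊(ξ)g(ξ)| ≥ 0 be measurable and, for 1 < p ≤ 2,
q = p/(p-1), suppose the slice bound
(∫ G(ξ)^q e^{-2πx₀q|ξ|} dξ)^{1/q} ≤ (∫ |F(x₀+x̲)|^p dx̲)^{1/p}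
holds for every x₀ > 0 (Hausdorff–Young).  Then
(∫ G(ξ)^q (2πp|ξ|)^{-q/p} dξ)^{1/q} ≤ (∫₀^∞ ∫ |F(x₀+x̲)|^p dx̲ dx₀)^{1/p}. -/
theorem bergman_integrated_bound (n : ℕ) (p q : ℝ) (hp1 : 1 < p) (hp2 : p ≤ 2)
    (hq : q = p / (p - 1))
    (G : (Fin n → ℝ) → ℝ) (hGm : Measurable G) (hGpos : ∀ ξ, 0 ≤ G ξ)
    (FN : ℝ → (Fin n → ℝ) → ℝ) (hFNpos : ∀ x₀ x, 0 ≤ FN x₀ x)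
    (hFNm : Measurable (fun z : ℝ × (Fin n → ℝ) => FN z.1 z.2))
    (hslice : ∀ x₀ : ℝ, 0 < x₀ →
      (∫⁻ ξ : Fin n → ℝ,
          ENNReal.ofReal (G ξ ^ q * Real.exp (-(2 * π * x₀ * q * nrm ξ)))) ^ (1 / q) ≤
        (∫⁻ x : Fin n → ℝ, ENNReal.ofReal (FN x₀ x ^ p)) ^ (1 / p)) :
    (∫⁻ ξ : Fin n → ℝ,
        ENNReal.ofReal (G ξ ^ q / (2 * π * p * nrm ξ) ^ (q / p))) ^ (1 / q) ≤
      (∫⁻ x₀ : ℝ in Set.Ioi (0 : ℝ),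
        ∫⁻ x : Fin n → ℝ, ENNReal.ofReal (FN x₀ x ^ p)) ^ (1 / p) := by
  have hp0 : (0:ℝ) < p := lt_trans one_pos hp1
  have hpne : p ≠ 0 := ne_of_gt hp0
  have hp1' : (0:ℝ) < p - 1 := sub_pos.2 hp1
  have hq1 : 1 < q := by rw [hq, lt_div_iff₀ hp1']; linarith
  have hq0 : (0:ℝ) < q := lt_trans one_pos hq1
  have hqne : q ≠ 0 := ne_of_gt hq0
  set r : ℝ := q / p with hrdef
  have hr1 : (1:ℝ) ≤ r := by
    rw [hrdef, le_div_iff₀ hp0, one_mul, hq, le_div_iff₀ hp1']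
    nlinarith
  have hr0 : (0:ℝ) < r := lt_of_lt_of_le one_pos hr1
  have hrne : r ≠ 0 := ne_of_gt hr0
  have hpr : p * r = q := by rw [hrdef]; field_simp
  set f : ℝ → (Fin n → ℝ) → ℝ≥0∞ := fun x₀ ξ =>
    ENNReal.ofReal (G ξ ^ p * Real.exp (-(2 * π * x₀ * p * nrm ξ))) with hfdef
  have hfm : Measurable (Function.uncurry f) := by
    apply Measurable.ennreal_ofReal
    apply Measurable.mul
    · exact (hGm.comp measurable_snd).pow_const p
    · exact Real.measurable_exp.comp
        ((((measurable_const.mul measurable_fst).mul measurable_const).mul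
          (measurable_nrm.comp measurable_snd)).neg)
  have hfr : ∀ x₀ ξ, f x₀ ξ ^ r =
      ENNReal.ofReal (G ξ ^ q * Real.exp (-(2 * π * x₀ * q * nrm ξ))) := by
    intro x₀ ξ
    rw [hfdef]
    rw [ENNReal.ofReal_rpow_of_nonneg (mul_nonneg (Real.rpow_nonneg (hGpos ξ) p) (Real.exp_pos _).le) hr0.le]
    congr 1
    rw [Real.mul_rpow (Real.rpow_nonneg (hGpos ξ) p) (Real.exp_pos _).le,
      ← Real.rpow_mul (hGpos ξ), hpr, ← Real.exp_mul]
    congr 2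
    rw [← hpr]; ring
  -- slice bound in the form needed
  have hslice' : ∀ x₀ ∈ Set.Ioi (0:ℝ),
      (∫⁻ ξ, f x₀ ξ ^ r) ^ (1/r) ≤ ∫⁻ x, ENNReal.ofReal (FN x₀ x ^ p) := by
    intro x₀ hx₀
    have h := hslice x₀ hx₀
    have h1r : (1:ℝ)/r = 1/q * p := by
      rw [hrdef]; field_simp
    calc (∫⁻ ξ, f x₀ ξ ^ r) ^ (1/r)
        = ((∫⁻ ξ, ENNReal.ofReal (G ξ ^ q * Real.exp (-(2 * π * x₀ * q * nrm ξ)))) ^ (1/q)) ^ p := by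
          simp_rw [hfr]
          rw [← ENNReal.rpow_mul, h1r]
    _ ≤ ((∫⁻ x, ENNReal.ofReal (FN x₀ x ^ p)) ^ (1/p)) ^ p :=
          ENNReal.rpow_le_rpow h hp0.le
    _ = ∫⁻ x, ENNReal.ofReal (FN x₀ x ^ p) := by
          rw [← ENNReal.rpow_mul, one_div, inv_mul_cancel₀ hpne, ENNReal.rpow_one]
  -- pointwise bound for the LHS integrand
  have hpt : ∀ ξ, ENNReal.ofReal (G ξ ^ q / (2 * π * p * nrm ξ) ^ (q / p)) ≤
      (∫⁻ x₀ in Set.Ioi (0:ℝ), f x₀ ξ) ^ r := by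
    intro ξ
    rcases eq_or_lt_of_le (nrm_nonneg ξ) with hz | hz
    · rw [← hz, mul_zero, Real.zero_rpow (ne_of_gt (div_pos hq0 hp0)), div_zero,
        ENNReal.ofReal_zero]
      exact zero_le
    · have hc : (0:ℝ) < 2 * π * p * nrm ξ := by
        have hπ := Real.pi_pos
        positivity
      have hinner : ∫⁻ x₀ in Set.Ioi (0:ℝ), f x₀ ξ =
          ENNReal.ofReal (G ξ ^ p) * ENNReal.ofReal (1 / (2 * π * p * nrm ξ)) := by
        rw [hfdef]
        simp only
        have heq : ∀ x₀ : ℝ, ENNReal.ofReal (G ξ ^ p * Real.exp (-(2 * π * x₀ * p * nrm ξ)))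
            = ENNReal.ofReal (G ξ ^ p) *
              ENNReal.ofReal (Real.exp (-((2 * π * p * nrm ξ) * x₀))) := by
          intro x₀
          rw [← ENNReal.ofReal_mul (Real.rpow_nonneg (hGpos ξ) p)]
          congr 3
          ring
        simp_rw [heq]
        rw [lintegral_const_mul' _ _ ENNReal.ofReal_ne_top]
        rw [lintegral_exp_neg_mul_Ioi hc]
      rw [hinner, ← ENNReal.ofReal_mul (Real.rpow_nonneg (hGpos ξ) p),
        ENNReal.ofReal_rpow_of_nonneg (mul_nonneg (Real.rpow_nonneg (hGpos ξ) p) (one_div_nonneg.mpr hc.le)) hr0.le]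
      apply le_of_eq
      congr 1
      rw [mul_one_div, Real.div_rpow (Real.rpow_nonneg (hGpos ξ) p) hc.le,
        ← Real.rpow_mul (hGpos ξ), hpr]
  -- Minkowski
  have hmink := lintegral_lintegral_rpow_le (volume.restrict (Set.Ioi (0:ℝ)))
    (volume : Measure (Fin n → ℝ)) f hfm hr1
  have hRHS : ∫⁻ x₀ in Set.Ioi (0:ℝ), (∫⁻ ξ, f x₀ ξ ^ r) ^ (1/r) ≤
      ∫⁻ x₀ in Set.Ioi (0:ℝ), ∫⁻ x, ENNReal.ofReal (FN x₀ x ^ p) :=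
    setLIntegral_mono' measurableSet_Ioi hslice'
  have hkey : ∫⁻ ξ, (∫⁻ x₀ in Set.Ioi (0:ℝ), f x₀ ξ) ^ r ≤
      (∫⁻ x₀ in Set.Ioi (0:ℝ), ∫⁻ x, ENNReal.ofReal (FN x₀ x ^ p)) ^ r := by
    have h := le_trans hmink hRHS
    calc ∫⁻ ξ, (∫⁻ x₀ in Set.Ioi (0:ℝ), f x₀ ξ) ^ r
        = ((∫⁻ ξ, (∫⁻ x₀ in Set.Ioi (0:ℝ), f x₀ ξ) ^ r) ^ (1/r)) ^ r := by
          rw [← ENNReal.rpow_mul, one_div, inv_mul_cancel₀ hrne, ENNReal.rpow_one]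
    _ ≤ _ := ENNReal.rpow_le_rpow h hr0.le
  calc (∫⁻ ξ, ENNReal.ofReal (G ξ ^ q / (2 * π * p * nrm ξ) ^ (q / p))) ^ (1/q)
      ≤ (∫⁻ ξ, (∫⁻ x₀ in Set.Ioi (0:ℝ), f x₀ ξ) ^ r) ^ (1/q) :=
        ENNReal.rpow_le_rpow (lintegral_mono hpt) (by positivity)
  _ ≤ (((∫⁻ x₀ in Set.Ioi (0:ℝ), ∫⁻ x, ENNReal.ofReal (FN x₀ x ^ p)) ^ r)) ^ (1/q) :=
        ENNReal.rpow_le_rpow hkey (by positivity)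
  _ = (∫⁻ x₀ in Set.Ioi (0:ℝ), ∫⁻ x, ENNReal.ofReal (FN x₀ x ^ p)) ^ (1/p) := by
        rw [← ENNReal.rpow_mul]
        congr 1
        rw [hrdef, div_mul_div_comm, mul_one, mul_comm p q, ← div_div, div_self hqne]
end

section
/- For a harmonic function u on R^{n+1}_+ given as the Poisson integral u(x̲, x₀) = (P_{x₀} * f)(x̲) of f ∈ L^p(R^n), 1 ≤ p ≤ ∞, the nontangential maximal function u*(x̲) = sup_{|y̲-x̲| < α x₀} |u(y̲, x₀)| satisfies u*(x̲) ≤ A · M(f)(x̲) for a constant A depending only on n and α, where M is the Hardy–Littlewood maximal function. -/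
open Real MeasureTheory Metric

noncomputable def sigma (n : ℕ) : ℝ :=
  π ^ (((n : ℝ) + 1) / 2) / Real.Gamma (((n : ℝ) + 1) / 2)

/-- Poisson kernel of the upper half-space. -/
noncomputable def P (n : ℕ) (x₀ : ℝ) (x : EuclideanSpace ℝ (Fin n)) : ℝ :=
  (1 / sigma n) * x₀ / (x₀ ^ 2 + ‖x‖ ^ 2) ^ (((n : ℝ) + 1) / 2)

/-- The Hardy–Littlewood maximal function (with values in [0,∞]). -/
noncomputable def HLmax {n : ℕ} (f : EuclideanSpace ℝ (Fin n) → ℝ)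
    (x : EuclideanSpace ℝ (Fin n)) : ENNReal :=
  ⨆ (r : ℝ) (_ : 0 < r),
    (volume (Metric.ball x r))⁻¹ * ∫⁻ z in Metric.ball x r, ENNReal.ofReal |f z|


lemma sigma_pos (n : ℕ) : 0 < sigma n := by
  have h : (0:ℝ) < ((n:ℝ)+1)/2 := by positivity
  exact div_pos (Real.rpow_pos_of_pos Real.pi_pos _) (Real.Gamma_pos_of_pos h)

lemma sq_rpow_half (r : ℝ) (hr : 0 ≤ r) (n : ℕ) :
    ((r^2 : ℝ)) ^ (((n:ℝ)+1)/2) = r ^ (n+1) := by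
  rw [← Real.rpow_natCast r 2, ← Real.rpow_mul hr, ← Real.rpow_natCast r (n+1)]
  congr 1
  push_cast
  ring

lemma P_nonneg (n : ℕ) (x₀ : ℝ) (hx₀ : 0 < x₀) (w : EuclideanSpace ℝ (Fin n)) :
    0 ≤ P n x₀ w := by
  unfold P
  have := sigma_pos n
  positivity

lemma denom_pos (n : ℕ) (x₀ : ℝ) (hx₀ : 0 < x₀) (w : EuclideanSpace ℝ (Fin n)) :
    0 < (x₀ ^ 2 + ‖w‖ ^ 2) ^ (((n : ℝ) + 1) / 2) := by positivity

lemma P_le (n : ℕ) (x₀ : ℝ) (hx₀ : 0 < x₀) (w : EuclideanSpace ℝ (Fin n))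
    (r : ℝ) (hr : 0 < r) (h : r^2 ≤ x₀^2 + ‖w‖^2) :
    P n x₀ w ≤ (1 / sigma n) * x₀ / r ^ (n+1) := by
  have hσ := sigma_pos n
  have hd : (r:ℝ) ^ (n+1) ≤ (x₀ ^ 2 + ‖w‖ ^ 2) ^ (((n : ℝ) + 1) / 2) := by
    rw [← sq_rpow_half r hr.le n]
    exact Real.rpow_le_rpow (by positivity) h (by positivity)
  unfold P
  gcongr

lemma P_compare (n : ℕ) (x₀ α : ℝ) (hx₀ : 0 < x₀) (hα : 0 < α)
    (x y z : EuclideanSpace ℝ (Fin n)) (hxy : ‖y - x‖ < α * x₀) :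
    P n x₀ (y - z) ≤ (2 + 2*α^2) ^ (((n:ℝ)+1)/2) * P n x₀ (x - z) := by
  have hσ := sigma_pos n
  have hbase : x₀^2 + ‖x - z‖^2 ≤ (2 + 2*α^2) * (x₀^2 + ‖y - z‖^2) := by
    have h1 : ‖x - z‖ ≤ ‖y - x‖ + ‖y - z‖ := by
      have := norm_sub_le (x - y) (z - y)
      calc ‖x - z‖ = ‖(x - y) - (z - y)‖ := by congr 1; abel
        _ ≤ ‖x - y‖ + ‖z - y‖ := norm_sub_le _ _
        _ = ‖y - x‖ + ‖y - z‖ := by rw [norm_sub_rev x y, norm_sub_rev z y]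
    have h2 : ‖x - z‖ ≤ α * x₀ + ‖y - z‖ := h1.trans (by linarith)
    have h3 : ‖x - z‖^2 ≤ (α * x₀ + ‖y - z‖)^2 := by
      have := norm_nonneg (x - z); nlinarith [norm_nonneg (y - z)]
    nlinarith [norm_nonneg (y - z), sq_nonneg (α*x₀ - ‖y - z‖)]
  have hKpos : (0:ℝ) < 2 + 2*α^2 := by positivity
  have hdy := denom_pos n x₀ hx₀ (y - z)
  have hdx := denom_pos n x₀ hx₀ (x - z)
  have hD : (x₀^2 + ‖x - z‖^2) ^ (((n:ℝ)+1)/2) ≤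
      (2 + 2*α^2) ^ (((n:ℝ)+1)/2) * (x₀^2 + ‖y - z‖^2) ^ (((n:ℝ)+1)/2) := by
    rw [← Real.mul_rpow hKpos.le (by positivity)]
    exact Real.rpow_le_rpow (by positivity) hbase (by positivity)
  have hKp : (0:ℝ) < (2 + 2*α^2) ^ (((n:ℝ)+1)/2) := Real.rpow_pos_of_pos hKpos _
  unfold P
  rw [div_le_iff₀ hdy]
  have key : (1 / sigma n) * x₀ * (x₀^2 + ‖x - z‖^2) ^ (((n:ℝ)+1)/2) ≤
      (1 / sigma n) * x₀ * ((2 + 2*α^2) ^ (((n:ℝ)+1)/2) * (x₀^2 + ‖y - z‖^2) ^ (((n:ℝ)+1)/2)) := by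
    apply mul_le_mul_of_nonneg_left hD (by positivity)
  calc (1 / sigma n) * x₀
      = ((1 / sigma n) * x₀ * (x₀^2 + ‖x - z‖^2) ^ (((n:ℝ)+1)/2)) / (x₀^2 + ‖x - z‖^2) ^ (((n:ℝ)+1)/2) := by
        field_simp
    _ ≤ ((1 / sigma n) * x₀ * ((2 + 2*α^2) ^ (((n:ℝ)+1)/2) * (x₀^2 + ‖y - z‖^2) ^ (((n:ℝ)+1)/2))) / (x₀^2 + ‖x - z‖^2) ^ (((n:ℝ)+1)/2) := by
        gcongr
    _ = (2 + 2*α^2) ^ (((n:ℝ)+1)/2) * ((1 / sigma n) * x₀ / (x₀^2 + ‖x - z‖^2) ^ (((n:ℝ)+1)/2)) * (x₀^2 + ‖y - z‖^2) ^ (((n:ℝ)+1)/2) := by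
        ring

lemma vol_ball (n : ℕ) (x : EuclideanSpace ℝ (Fin n)) (r : ℝ) (hr : 0 < r) :
    volume (Metric.ball x r) =
      ENNReal.ofReal (r ^ n) * volume (Metric.ball (0 : EuclideanSpace ℝ (Fin n)) 1) := by
  rcases Nat.eq_zero_or_pos n with hn | hn
  · subst hn
    have hsub : Subsingleton (EuclideanSpace ℝ (Fin 0)) := by
      constructor; intro a b
      ext i; exact i.elim0
    have h1 : Metric.ball x r = Set.univ := by
      ext z; simp [Metric.mem_ball]
      have : z = x := Subsingleton.elim z x
      simp [this, hr]
    have h2 : Metric.ball (0 : EuclideanSpace ℝ (Fin 0)) 1 = Set.univ := by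
      ext z; simp [Metric.mem_ball]
      have : z = 0 := Subsingleton.elim z 0
      simp [this]
    simp [h1, h2]
  · haveI : Nontrivial (EuclideanSpace ℝ (Fin n)) := by
      refine ⟨0, EuclideanSpace.single ⟨0, hn⟩ 1, ?_⟩
      intro h
      have := congrArg (fun v => v ⟨0, hn⟩) h.symm
      simp [EuclideanSpace.single] at this
    rw [Measure.addHaar_ball volume x hr.le, finrank_euclideanSpace_fin]

lemma ball_avg {n : ℕ} (f : EuclideanSpace ℝ (Fin n) → ℝ)
    (x : EuclideanSpace ℝ (Fin n)) (r : ℝ) (hr : 0 < r) :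
    ∫⁻ z in Metric.ball x r, ENNReal.ofReal |f z| ≤
      volume (Metric.ball x r) * HLmax f x := by
  have h : (volume (Metric.ball x r))⁻¹ * ∫⁻ z in Metric.ball x r, ENNReal.ofReal |f z| ≤
      HLmax f x :=
    le_iSup₂ (f := fun (r : ℝ) (_ : 0 < r) =>
      (volume (Metric.ball x r))⁻¹ * ∫⁻ z in Metric.ball x r, ENNReal.ofReal |f z|) r hr
  have hv0 : volume (Metric.ball x r) ≠ 0 := (measure_ball_pos volume x hr).ne'
  have hvt : volume (Metric.ball x r) ≠ ⊤ := measure_ball_lt_top.ne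
  calc ∫⁻ z in Metric.ball x r, ENNReal.ofReal |f z|
      = volume (Metric.ball x r) *
        ((volume (Metric.ball x r))⁻¹ * ∫⁻ z in Metric.ball x r, ENNReal.ofReal |f z|) := by
        rw [← mul_assoc, ENNReal.mul_inv_cancel hv0 hvt, one_mul]
    _ ≤ volume (Metric.ball x r) * HLmax f x := mul_le_mul_right h _

lemma centered (n : ℕ) (x₀ : ℝ) (hx₀ : 0 < x₀) (f : EuclideanSpace ℝ (Fin n) → ℝ)
    (x : EuclideanSpace ℝ (Fin n)) :
    ∫⁻ z, ENNReal.ofReal (P n x₀ (x - z)) * ENNReal.ofReal |f z| ≤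
      ENNReal.ofReal ((1 + 2^(n+1)) / sigma n) *
        (volume (Metric.ball (0 : EuclideanSpace ℝ (Fin n)) 1) * HLmax f x) := by
  have hσ := sigma_pos n
  set ν := volume (Metric.ball (0 : EuclideanSpace ℝ (Fin n)) 1) with hν
  set M := HLmax f x with hM
  set g : EuclideanSpace ℝ (Fin n) → ENNReal :=
    fun z => ENNReal.ofReal (P n x₀ (x - z)) * ENNReal.ofReal |f z| with hg
  set A : ℕ → Set (EuclideanSpace ℝ (Fin n)) :=
    fun k => Metric.ball x (2^(k+1)*x₀) \ Metric.ball x (2^k*x₀) with hA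
  -- ball piece
  have hball : ∫⁻ z in Metric.ball x x₀, g z ≤ ENNReal.ofReal (1 / sigma n) * (ν * M) := by
    have hκ : (0:ℝ) ≤ (1 / sigma n) * x₀ / x₀^(n+1) := by positivity
    have h1 : ∀ z, g z ≤ ENNReal.ofReal ((1/sigma n) * x₀ / x₀^(n+1)) * ENNReal.ofReal |f z| := by
      intro z
      refine mul_le_mul_left (ENNReal.ofReal_le_ofReal ?_) _
      exact P_le n x₀ hx₀ (x - z) x₀ hx₀ (le_add_of_nonneg_right (by positivity))
    calc ∫⁻ z in Metric.ball x x₀, g z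
        ≤ ∫⁻ z in Metric.ball x x₀,
            ENNReal.ofReal ((1/sigma n) * x₀ / x₀^(n+1)) * ENNReal.ofReal |f z| :=
          lintegral_mono h1
      _ = ENNReal.ofReal ((1/sigma n) * x₀ / x₀^(n+1)) *
            ∫⁻ z in Metric.ball x x₀, ENNReal.ofReal |f z| :=
          lintegral_const_mul' _ _ ENNReal.ofReal_ne_top
      _ ≤ ENNReal.ofReal ((1/sigma n) * x₀ / x₀^(n+1)) * (volume (Metric.ball x x₀) * M) :=
          mul_le_mul_right (ball_avg f x x₀ hx₀) _
      _ = ENNReal.ofReal ((1/sigma n) * x₀ / x₀^(n+1)) * (ENNReal.ofReal (x₀^n) * ν * M) := by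
          rw [vol_ball n x x₀ hx₀]
      _ = ENNReal.ofReal ((1/sigma n) * x₀ / x₀^(n+1) * x₀^n) * (ν * M) := by
          rw [ENNReal.ofReal_mul hκ]; ring
      _ = ENNReal.ofReal (1 / sigma n) * (ν * M) := by
          congr 2
          rw [pow_succ]
          field_simp
  -- annulus pieces
  have hann : ∀ k : ℕ, ∫⁻ z in A k, g z ≤
      ENNReal.ofReal (2^n / sigma n * (1/2)^k) * (ν * M) := by
    intro k
    have h2k : (0:ℝ) < 2^k * x₀ := by positivity
    have h2k1 : (0:ℝ) < 2^(k+1) * x₀ := by positivity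
    have hκ : (0:ℝ) ≤ (1 / sigma n) * x₀ / ((2:ℝ)^k * x₀)^(n+1) := by positivity
    have hmeas : MeasurableSet (A k) :=
      measurableSet_ball.diff measurableSet_ball
    have h1 : ∫⁻ z in A k, g z ≤ ∫⁻ z in A k,
        ENNReal.ofReal ((1/sigma n) * x₀ / ((2:ℝ)^k * x₀)^(n+1)) * ENNReal.ofReal |f z| := by
      refine lintegral_mono_ae ?_
      filter_upwards [ae_restrict_mem hmeas] with z hz
      refine mul_le_mul_left (ENNReal.ofReal_le_ofReal ?_) _
      refine P_le n x₀ hx₀ (x - z) (2^k * x₀) h2k ?_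
      have hd : 2^k * x₀ ≤ dist z x := by
        have := hz.2
        simpa [Metric.mem_ball, not_lt] using this
      have hd' : 2^k * x₀ ≤ ‖x - z‖ := by
        rw [norm_sub_rev]; rwa [dist_eq_norm] at hd
      nlinarith [sq_nonneg x₀]
    calc ∫⁻ z in A k, g z
        ≤ ∫⁻ z in A k,
            ENNReal.ofReal ((1/sigma n) * x₀ / ((2:ℝ)^k * x₀)^(n+1)) * ENNReal.ofReal |f z| := h1
      _ ≤ ∫⁻ z in Metric.ball x (2^(k+1)*x₀),
            ENNReal.ofReal ((1/sigma n) * x₀ / ((2:ℝ)^k * x₀)^(n+1)) * ENNReal.ofReal |f z| :=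
          lintegral_mono_set Set.diff_subset
      _ = ENNReal.ofReal ((1/sigma n) * x₀ / ((2:ℝ)^k * x₀)^(n+1)) *
            ∫⁻ z in Metric.ball x (2^(k+1)*x₀), ENNReal.ofReal |f z| :=
          lintegral_const_mul' _ _ ENNReal.ofReal_ne_top
      _ ≤ ENNReal.ofReal ((1/sigma n) * x₀ / ((2:ℝ)^k * x₀)^(n+1)) *
            (volume (Metric.ball x (2^(k+1)*x₀)) * M) :=
          mul_le_mul_right (ball_avg f x _ h2k1) _
      _ = ENNReal.ofReal ((1/sigma n) * x₀ / ((2:ℝ)^k * x₀)^(n+1) * ((2:ℝ)^(k+1)*x₀)^n) *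
            (ν * M) := by
          rw [vol_ball n x _ h2k1, ENNReal.ofReal_mul hκ]; ring
      _ = ENNReal.ofReal (2^n / sigma n * (1/2)^k) * (ν * M) := by
          congr 2
          have h2 : ((2:ℝ)^k * x₀)^(n+1) = 2^(k*(n+1)) * (x₀^n * x₀) := by
            rw [mul_pow, ← pow_mul, pow_succ]
          have h3 : ((2:ℝ)^(k+1) * x₀)^n = 2^((k+1)*n) * x₀^n := by
            rw [mul_pow, ← pow_mul]
          have h4 : (2:ℝ)^((k*(n+1)) + n) = (2:ℝ)^(((k+1)*n) + k) := by
            congr 1; ring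
          rw [h2, h3, one_div (2:ℝ), inv_pow]
          rw [pow_add, pow_add] at h4
          field_simp
          linear_combination (-(x₀*x₀^n*(sigma n))) * h4
  -- covering
  have cover : (Set.univ : Set (EuclideanSpace ℝ (Fin n))) ⊆
      Metric.ball x x₀ ∪ ⋃ k, A k := by
    intro z _
    by_cases hz : z ∈ Metric.ball x x₀
    · exact Or.inl hz
    · right
      have ht : x₀ ≤ dist z x := by simpa [Metric.mem_ball, not_lt] using hz
      classical
      have hex : ∃ k : ℕ, dist z x < 2^(k+1) * x₀ := by
        obtain ⟨m, hm⟩ := pow_unbounded_of_one_lt (dist z x / x₀) (by norm_num : (1:ℝ) < 2)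
        refine ⟨m, ?_⟩
        have : dist z x < 2^m * x₀ := by rwa [div_lt_iff₀ hx₀] at hm
        have h2m : (2:ℝ)^m * x₀ ≤ 2^(m+1) * x₀ := by
          have : (2:ℝ)^m ≤ 2^(m+1) := pow_le_pow_right₀ (by norm_num) (Nat.le_succ m)
          nlinarith
        linarith
      refine Set.mem_iUnion.2 ⟨Nat.find hex, Metric.mem_ball.2 (Nat.find_spec hex), ?_⟩
      intro hcon
      have hcon' : dist z x < 2^(Nat.find hex) * x₀ := Metric.mem_ball.1 hcon
      rcases Nat.eq_zero_or_pos (Nat.find hex) with h0 | hK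
      · rw [h0] at hcon'
        simp at hcon'
        linarith
      · obtain ⟨j, hj⟩ := Nat.exists_eq_succ_of_ne_zero hK.ne'
        have hmin := Nat.find_min hex (m := j) (by omega)
        rw [hj] at hcon'
        exact hmin hcon'
  -- combine
  have hsum : ∑' k : ℕ, ENNReal.ofReal (2^n / sigma n * (1/2)^k) * (ν * M) =
      ENNReal.ofReal (2^(n+1) / sigma n) * (ν * M) := by
    rw [ENNReal.tsum_mul_right]
    congr 1
    have h1 : ∀ k : ℕ, ENNReal.ofReal (2^n / sigma n * (1/2)^k) =
        ENNReal.ofReal (2^n / sigma n) * (ENNReal.ofReal (1/2))^k := by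
      intro k
      rw [ENNReal.ofReal_mul (by positivity), ENNReal.ofReal_pow (by norm_num)]
    simp_rw [h1]
    rw [ENNReal.tsum_mul_left]
    have h2 : ENNReal.ofReal (1/2 : ℝ) = 2⁻¹ := by
      rw [ENNReal.ofReal_div_of_pos (by norm_num)]
      norm_num
    rw [h2, ENNReal.tsum_geometric]
    have h3 : (1 - 2⁻¹ : ENNReal)⁻¹ = 2 := by
      rw [ENNReal.one_sub_inv_two]
      simp
    rw [h3]
    rw [← ENNReal.ofReal_ofNat 2, ← ENNReal.ofReal_mul (by positivity)]
    congr 1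
    rw [pow_succ]
    ring
  calc ∫⁻ z, g z = ∫⁻ z in Set.univ, g z := (setLIntegral_univ g).symm
    _ ≤ ∫⁻ z in Metric.ball x x₀ ∪ ⋃ k, A k, g z := lintegral_mono_set cover
    _ ≤ (∫⁻ z in Metric.ball x x₀, g z) + ∫⁻ z in ⋃ k, A k, g z := lintegral_union_le _ _ _
    _ ≤ (∫⁻ z in Metric.ball x x₀, g z) + ∑' k, ∫⁻ z in A k, g z :=
        add_le_add (le_refl _) (lintegral_iUnion_le _ _)
    _ ≤ ENNReal.ofReal (1 / sigma n) * (ν * M) +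
        ∑' k : ℕ, ENNReal.ofReal (2^n / sigma n * (1/2)^k) * (ν * M) :=
        add_le_add hball (ENNReal.tsum_le_tsum hann)
    _ = (ENNReal.ofReal (1 / sigma n) + ENNReal.ofReal (2^(n+1) / sigma n)) * (ν * M) := by
        rw [hsum, add_mul]
    _ = ENNReal.ofReal ((1 + 2^(n+1)) / sigma n) * (ν * M) := by
        rw [← ENNReal.ofReal_add (by positivity) (by positivity)]
        congr 1
        ring

/-- for f ∈ Lᵖ(ℝⁿ), 1 ≤ p ≤ ∞, the Poisson integral
u(y̲, x₀) = (P_{x₀} * f)(y̲) satisfies the nontangential maximal bound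
u*(x̲) = sup_{|y̲-x̲|<αx₀} |u(y̲,x₀)| ≤ A·M(f)(x̲), with A = A(n, α). -/
theorem nontangential_maximal_bound (n : ℕ) (p : ENNReal) (hp : 1 ≤ p)
    (α : ℝ) (hα : 0 < α)
    (f : EuclideanSpace ℝ (Fin n) → ℝ) (hf : MemLp f p volume) :
    ∃ A : ℝ, 0 < A ∧
      ∀ x : EuclideanSpace ℝ (Fin n), ∀ y : EuclideanSpace ℝ (Fin n), ∀ x₀ : ℝ,
        0 < x₀ → ‖y - x‖ < α * x₀ →
        ENNReal.ofReal |∫ z : EuclideanSpace ℝ (Fin n), P n x₀ (y - z) * f z| ≤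
          ENNReal.ofReal A * HLmax f x := by
  have hσ := sigma_pos n
  set ν := volume (Metric.ball (0 : EuclideanSpace ℝ (Fin n)) 1) with hν
  have hν0 : ν ≠ 0 := (measure_ball_pos volume _ one_pos).ne'
  have hνt : ν ≠ ⊤ := measure_ball_lt_top.ne
  set K : ℝ := (2 + 2*α^2) ^ (((n:ℝ)+1)/2) with hK
  have hKpos : 0 < K := Real.rpow_pos_of_pos (by positivity) _
  refine ⟨K * ((1 + 2^(n+1)) / sigma n * ν.toReal), ?_, ?_⟩
  · have : 0 < ν.toReal := ENNReal.toReal_pos hν0 hνt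
    positivity
  intro x y x₀ hx₀ hxy
  set M := HLmax f x with hM
  calc ENNReal.ofReal |∫ z : EuclideanSpace ℝ (Fin n), P n x₀ (y - z) * f z|
      = ‖∫ z : EuclideanSpace ℝ (Fin n), P n x₀ (y - z) * f z‖ₑ :=
        (Real.enorm_eq_ofReal_abs _).symm
    _ ≤ ∫⁻ z, ‖P n x₀ (y - z) * f z‖ₑ := enorm_integral_le_lintegral_enorm _
    _ = ∫⁻ z, ENNReal.ofReal (P n x₀ (y - z)) * ENNReal.ofReal |f z| := by
        congr 1
        funext z
        rw [Real.enorm_eq_ofReal_abs, abs_mul,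
          abs_of_nonneg (P_nonneg n x₀ hx₀ _), ENNReal.ofReal_mul (P_nonneg n x₀ hx₀ _)]
    _ ≤ ∫⁻ z, ENNReal.ofReal K * (ENNReal.ofReal (P n x₀ (x - z)) * ENNReal.ofReal |f z|) := by
        refine lintegral_mono fun z => ?_
        rw [← mul_assoc]
        refine mul_le_mul_left ?_ _
        rw [← ENNReal.ofReal_mul hKpos.le]
        exact ENNReal.ofReal_le_ofReal (P_compare n x₀ α hx₀ hα x y z hxy)
    _ = ENNReal.ofReal K *
        ∫⁻ z, ENNReal.ofReal (P n x₀ (x - z)) * ENNReal.ofReal |f z| :=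
        lintegral_const_mul' _ _ ENNReal.ofReal_ne_top
    _ ≤ ENNReal.ofReal K * (ENNReal.ofReal ((1 + 2^(n+1)) / sigma n) * (ν * M)) :=
        mul_le_mul_right (centered n x₀ hx₀ f x) _
    _ = ENNReal.ofReal (K * ((1 + 2^(n+1)) / sigma n * ν.toReal)) * M := by
        rw [ENNReal.ofReal_mul hKpos.le, ENNReal.ofReal_mul (by positivity),
          ENNReal.ofReal_toReal hνt]
        ring
end
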